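/- Every matrix A ∈ ℤ^{d×n} has only finitely many extended atomic fibers, i.e., the set E(A) = {b ∈ ℤ^d : Q^I_{A,b} ≠ ∅ and Q^I_{A,b} is atomic} is finite. -/

import Mathlib

def sqle {n : ℕ} (u v : Fin n → ℤ) : Prop :=
  ∀ j, 0 ≤ u j * v j ∧ |u j| ≤ |v j|

def QF {d n : ℕ} (A : Matrix (Fin d) (Fin n) ℤ) (b : Fin d → ℤ) : Set (Fin n → ℤ) :=
  {z | A.mulVec z = b}

def PF {d n : ℕ} (A : Matrix (Fin d) (Fin n) ℤ) (b : Fin d → ℤ) : Set (Fin n → ℤ) :=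
  {z | A.mulVec z = b ∧ 0 ≤ z}

def oplus {n : ℕ} (S T U : Set (Fin n → ℤ)) : Prop :=
  ∀ z ∈ S, ∃ z₁ ∈ T, ∃ z₂ ∈ U, sqle z₁ z ∧ sqle z₂ z ∧ z = z₁ + z₂

def isAtomicExt {d n : ℕ} (A : Matrix (Fin d) (Fin n) ℤ) (b : Fin d → ℤ) : Prop :=
  ∀ b₁ b₂ : Fin d → ℤ, b = b₁ + b₂ →
    oplus (QF A b) (QF A b₁) (QF A b₂) → b = b₁ ∨ b = b₂

/-! ### Auxiliary development -/

/-- reverse inclusion relation on sets -/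
def revSub {α : Type*} (U V : Set α) : Prop := V ⊆ U

instance {α : Type*} : IsRefl (Set α) revSub := ⟨fun _ => subset_rfl⟩
instance {α : Type*} : IsTrans (Set α) revSub := ⟨fun _ _ _ h1 h2 => h2.trans h1⟩
instance {α : Type*} : IsPreorder (Set α) revSub where
  refl := fun _ => subset_rfl
  trans := fun _ _ _ h1 h2 => h2.trans h1

def UpClosed {k : ℕ} (U : Set (Fin k → ℕ)) : Prop :=
  ∀ x ∈ U, ∀ y, x ≤ y → y ∈ U

lemma sublistForall₂_get {α : Type*} {r : α → α → Prop} :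
    ∀ {l₁ l₂ : List α}, List.SublistForall₂ r l₁ l₂ →
      ∀ t (ht : t < l₁.length), ∃ u, ∃ hu : u < l₂.length,
        t ≤ u ∧ r (l₁.get ⟨t, ht⟩) (l₂.get ⟨u, hu⟩) := by
  intro l₁ l₂ h
  induction h with
  | nil => intro t ht; exact absurd ht (by simp)
  | @cons a₁ a₂ m₁ m₂ hr hs ih =>
    intro t ht
    cases t with
    | zero => exact ⟨0, by simp, le_refl _, hr⟩
    | succ t =>
      obtain ⟨u, hu, htu, hru⟩ := ih t (by simpa using ht)
      exact ⟨u + 1, by simpa using hu, by omega, hru⟩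
  | @cons_right a m₁ m₂ hs ih =>
    intro t ht
    obtain ⟨u, hu, htu, hru⟩ := ih t ht
    exact ⟨u + 1, by simpa using hu, by omega, hru⟩

lemma cons_le_cons {k : ℕ} {t t' : ℕ} {v v' : Fin k → ℕ} (ht : t ≤ t') (hv : v ≤ v') :
    Fin.cons t v ≤ Fin.cons (α := fun _ => ℕ) t' v' := by
  intro j
  refine Fin.cases ?_ ?_ j
  · simpa using ht
  · intro i; simpa using hv i

theorem upsets_pwo : ∀ k : ℕ,
    {U : Set (Fin k → ℕ) | UpClosed U}.PartiallyWellOrderedOn revSub := by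
  intro k
  induction k with
  | zero =>
    rw [Set.partiallyWellOrderedOn_iff_exists_lt]
    intro f _
    set x0 : Fin 0 → ℕ := fun i => i.elim0 with hx0
    have hsub : ∀ i j : ℕ, (x0 ∈ f i → x0 ∈ f j) → revSub (f j) (f i) := by
      intro i j h y hy
      have : y = x0 := funext fun t => t.elim0
      subst this
      exact h hy
    by_cases h1 : x0 ∈ f 1
    · exact ⟨1, 2, by omega, hsub 2 1 fun _ => h1⟩
    · by_cases h0 : x0 ∈ f 0
      · exact ⟨0, 1, by omega, hsub 1 0 fun _ => h0⟩
      · exact ⟨0, 1, by omega, hsub 1 0 fun h => absurd h h1⟩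
  | succ k ih =>
    rw [Set.partiallyWellOrderedOn_iff_exists_lt]
    intro f hf
    classical
    set sl : Set (Fin (k+1) → ℕ) → ℕ → Set (Fin k → ℕ) :=
      fun U t => {v | Fin.cons t v ∈ U} with hsl
    have hsl_up : ∀ U, UpClosed U → ∀ t, UpClosed (sl U t) := by
      intro U hU t v hv v' hvv'
      exact hU _ hv _ (cons_le_cons le_rfl hvv')
    have hsl_mono : ∀ U, UpClosed U → ∀ t t', t ≤ t' → sl U t ⊆ sl U t' := by
      intro U hU t t' htt' v hv
      exact hU _ hv _ (cons_le_cons htt' le_rfl)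
    have hsl_sub : ∀ U V : Set (Fin (k+1) → ℕ), (∀ t, sl U t ⊆ sl V t) → U ⊆ V := by
      intro U V h x hx
      have hx' : Fin.tail x ∈ sl U (x 0) := by
        simp only [hsl, Set.mem_setOf_eq, Fin.cons_self_tail]
        exact hx
      have := h (x 0) hx'
      simpa [hsl, Fin.cons_self_tail] using this
    -- stabilization
    have hstab : ∀ i : ℕ, ∃ N, ∀ t, N ≤ t → sl (f i) t = sl (f i) N := by
      intro i
      by_contra hc
      push_neg at hc
      choose T hT1 hT2 using hc
      set g : ℕ → ℕ := fun m => T^[m] 0 with hg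
      have hchain : ∀ m, sl (f i) (g m) ⊂ sl (f i) (g (m+1)) := by
        intro m
        have hgs : g (m+1) = T (g m) := Function.iterate_succ_apply' T m 0
        rw [hgs]
        exact HasSubset.Subset.ssubset_of_ne
          (hsl_mono (f i) (hf i) _ _ (hT1 (g m))) (fun h => hT2 (g m) h.symm)
      have hmono : StrictMono (fun m => sl (f i) (g m)) :=
        strictMono_nat_of_lt_succ hchain
      obtain ⟨m, n, hmn, hrel⟩ := ih.exists_lt (f := fun m => sl (f i) (g m))
        (fun m => hsl_up (f i) (hf i) (g m))
      exact absurd (le_antisymm (hmono hmn).le hrel) (hmono hmn).ne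
    choose N hN using hstab
    -- monotone subsequence on limits
    obtain ⟨g, hg⟩ := ih.exists_monotone_subseq (f := fun i => sl (f i) (N i))
      (fun i => hsl_up (f i) (hf i) (N i))
    -- Higman on words
    set w : ℕ → List (Set (Fin k → ℕ)) :=
      fun i => (List.range (N i + 1)).map (sl (f i)) with hw
    have hwmem : ∀ i, w i ∈ {l : List (Set (Fin k → ℕ)) | ∀ x, x ∈ l → x ∈ {U | UpClosed U}} := by
      intro i x hx
      simp only [hw, List.mem_map, List.mem_range] at hx
      obtain ⟨t, _, rfl⟩ := hx
      exact hsl_up (f i) (hf i) t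
    obtain ⟨m, n, hmn, hsf⟩ :=
      (Set.PartiallyWellOrderedOn.partiallyWellOrderedOn_sublistForall₂ revSub ih).exists_lt
        (f := fun j => w (g j)) (fun j => hwmem (g j))
    refine ⟨g m, g n, g.strictMono hmn, ?_⟩
    -- goal : revSub (f (g m)) (f (g n)), i.e. f (g n) ⊆ f (g m)
    refine hsl_sub _ _ ?_
    intro t
    have hlim : sl (f (g n)) (N (g n)) ⊆ sl (f (g m)) (N (g m)) := hg m n hmn.le
    rcases le_or_gt t (N (g m)) with htm | htm
    · -- use the word embedding at position t
      have ht : t < (w (g m)).length := by simp [hw]; omega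
      obtain ⟨u, hu, htu, hru⟩ := sublistForall₂_get hsf t ht
      have hu' : u < N (g n) + 1 := by simpa [hw] using hu
      have hget_m : (w (g m)).get ⟨t, ht⟩ = sl (f (g m)) t := by
        simp [hw]
      have hget_n : (w (g n)).get ⟨u, hu⟩ = sl (f (g n)) u := by
        simp [hw]
      rw [hget_m, hget_n] at hru
      exact (hsl_mono (f (g n)) (hf (g n)) t u htu).trans hru
    · -- t beyond stabilization of m-word
      have h1 : sl (f (g n)) t ⊆ sl (f (g n)) (N (g n)) := by
        rcases le_or_gt t (N (g n)) with h | h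
        · exact hsl_mono (f (g n)) (hf (g n)) t (N (g n)) h
        · rw [hN (g n) t h.le]
      have h2 : sl (f (g m)) t = sl (f (g m)) (N (g m)) := hN (g m) t htm.le
      rw [h2]
      exact h1.trans hlim

/-- the sign-split embedding of `ℤ^n` into `ℕ^{2n}` -/
def phi {n : ℕ} (z : Fin n → ℤ) : Fin (2*n) → ℕ := fun j =>
  if h : (j : ℕ) < n then (z ⟨j, h⟩).toNat
  else (-(z ⟨(j : ℕ) - n, by omega⟩)).toNat

lemma phi_le_sqle {n : ℕ} {z' z : Fin n → ℤ} (h : phi z' ≤ phi z) : sqle z' z := by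
  intro j
  have hj1 : (j : ℕ) < 2*n := by omega
  have hj2 : n + (j : ℕ) < 2*n := by omega
  have hnot : ¬ (n + (j:ℕ) < n) := by omega
  have e1 : ∀ y : Fin n → ℤ, phi y ⟨(j:ℕ), hj1⟩ = (y j).toNat := by
    intro y; simp [phi, j.isLt]
  have e2 : ∀ y : Fin n → ℤ, phi y ⟨n + (j:ℕ), hj2⟩ = (-(y j)).toNat := by
    intro y; simp [phi, hnot, Nat.add_sub_cancel_left]
  have h1 : (z' j).toNat ≤ (z j).toNat := by
    have := h ⟨(j:ℕ), hj1⟩; rwa [e1, e1] at this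
  have h2 : (-(z' j)).toNat ≤ (-(z j)).toNat := by
    have := h ⟨n + (j:ℕ), hj2⟩; rwa [e2, e2] at this
  constructor
  · rcases le_or_gt 0 (z j) with hb | hb
    · have : 0 ≤ z' j := by omega
      exact mul_nonneg this hb
    · have hz : z' j ≤ 0 := by omega
      have := mul_nonneg (neg_nonneg.2 hz) (neg_nonneg.2 hb.le)
      rwa [neg_mul_neg] at this
  · rw [Int.abs_eq_natAbs, Int.abs_eq_natAbs]
    omega

lemma int_step {a b : ℤ} (h1 : 0 ≤ a * b) (h2 : |a| ≤ |b|) :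
    0 ≤ (b - a) * b ∧ |b - a| ≤ |b| := by
  rcases le_or_gt 0 b with hb | hb
  · rcases hb.lt_or_eq with hb0 | hb0
    · have ha : 0 ≤ a := by
        by_contra h'
        exact absurd h1 (not_le.mpr (mul_neg_of_neg_of_pos (not_le.mp h') hb0))
      have hab : a ≤ b := by
        rwa [abs_of_nonneg ha, abs_of_nonneg hb] at h2
      refine ⟨mul_nonneg (by linarith) hb, ?_⟩
      rw [abs_of_nonneg (by linarith : (0:ℤ) ≤ b - a), abs_of_nonneg hb]
      linarith
    · have hb0' : b = 0 := hb0.symm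
      subst hb0'
      have ha : a = 0 := by
        have : |a| ≤ 0 := by simpa using h2
        exact abs_nonpos_iff.mp this
      subst ha
      simp
  · have ha : a ≤ 0 := by
      by_contra h'
      exact absurd h1 (not_le.mpr (mul_neg_of_pos_of_neg (not_le.mp h') hb))
    have hab : b ≤ a := by
      have h2' := h2
      rw [abs_of_nonpos ha, abs_of_nonpos hb.le] at h2'
      linarith
    refine ⟨?_, ?_⟩
    · have hba : b - a ≤ 0 := by linarith
      have := mul_nonneg (neg_nonneg.2 hba) (neg_nonneg.2 hb.le)
      rwa [neg_mul_neg] at this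
    · rw [abs_of_nonpos (by linarith : b - a ≤ 0), abs_of_nonpos hb.le]
      linarith

lemma sqle_sub {n : ℕ} {z' z : Fin n → ℤ} (h : sqle z' z) : sqle (z - z') z := by
  intro j
  obtain ⟨h1, h2⟩ := h j
  simpa using int_step h1 h2

theorem extended_atomic_fibers_finite {d n : ℕ} (A : Matrix (Fin d) (Fin n) ℤ) :
    {b : Fin d → ℤ | (QF A b).Nonempty ∧ isAtomicExt A b}.Finite := by
  by_contra hinf
  have hinf0 : {b : Fin d → ℤ | (QF A b).Nonempty ∧ isAtomicExt A b}.Infinite := hinf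
  have hinf' : ({b : Fin d → ℤ | (QF A b).Nonempty ∧ isAtomicExt A b} \ {0}).Infinite :=
    hinf0.diff (Set.finite_singleton 0)
  set S := {b : Fin d → ℤ | (QF A b).Nonempty ∧ isAtomicExt A b} \ {0} with hS
  let e := hinf'.natEmbedding S
  set b : ℕ → Fin d → ℤ := fun i => (e i : Fin d → ℤ) with hb
  have hbS : ∀ i, b i ∈ S := fun i => (e i).2
  have hbinj : Function.Injective b := fun i j h => e.injective (Subtype.ext h)
  -- the up-sets
  set U : ℕ → Set (Fin (2*n) → ℕ) :=
    fun i => {y | ∃ z' ∈ QF A (b i), phi z' ≤ y} with hU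
  have hUup : ∀ i, UpClosed (U i) := by
    intro i y hy y' hyy'
    obtain ⟨z', hz', hle⟩ := hy
    exact ⟨z', hz', hle.trans hyy'⟩
  obtain ⟨m, n', hmn, hrel⟩ := (upsets_pwo (2*n)).exists_lt (f := U) (fun i => hUup i)
  -- hrel : U n' ⊆ U m
  have hatomic := (hbS n').1
  have hiso := ((Set.mem_diff _).mp (hbS n')).1.2
  -- build oplus
  have hoplus : oplus (QF A (b n')) (QF A (b m)) (QF A (b n' - b m)) := by
    intro z hz
    have hmem : phi z ∈ U n' := ⟨z, hz, le_rfl⟩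
    obtain ⟨z', hz', hle⟩ := hrel hmem
    have hsq : sqle z' z := phi_le_sqle hle
    refine ⟨z', hz', z - z', ?_, hsq, sqle_sub hsq, by ring⟩
    have : A.mulVec (z - z') = A.mulVec z - A.mulVec z' := Matrix.mulVec_sub A z z'
    rw [QF, Set.mem_setOf_eq, this, hz, hz']
  have := hiso (b m) (b n' - b m) (by ring) hoplus
  rcases this with h | h
  · exact absurd (hbinj h.symm) (by omega)
  · have : b m = 0 := by
      have := congrArg (fun x => b n' - x) h
      simpa using this.symm
    exact ((Set.mem_diff _).mp (hbS m)).2 (by simpa using this)
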